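/- There is a constant c > 0 such that the following holds. Let k ≥ 3, let m, U ≥ 2 with k ≤ m, and let A_1, …, A_{k−1} be sets of m integers each in {1, …, U}. Then there exists an SLP over the alphabet {0,1} of size at most c·k·m·log₂ U that generates the string v'_{A_1+⋯+A_{k−1}}, defined as the concatenation, over all tuples (a_1, …, a_{k−2}) ∈ A_1 × ⋯ × A_{k−2} in lexicographic order, of the blocks 0^{a_1+⋯+a_{k−2}} ∘ v_{A_{k−1}} ∘ 0^{(k−2)U−a_1−⋯−a_{k−2}}. -/

import Mathlib

/-- A rule of a straight-line program: either a terminal symbol, or the ordered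
pair `(j, k)` of the indices of two strictly earlier rules to be concatenated. -/
inductive SLPRule (α : Type*) where
  | sym (a : α)
  | pair (j k : ℕ)

/-- A straight-line program (SLP) over the alphabet `α`: a finite sequence of
rules, where each pair rule may only reference strictly earlier rules. -/
structure SLP (α : Type*) where
  rules : List (SLPRule α)
  wf : ∀ i : Fin rules.length, match rules.get i with
    | .sym _ => True
    | .pair j k => j < i.val ∧ k < i.val

/-- The size of an SLP is its number of rules. -/
def SLP.size {α : Type*} (G : SLP α) : ℕ := G.rules.length

/-- The list of the strings `eval(R_1), …, eval(R_n)` generated by the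
successive rules of an SLP: a symbol rule evaluates to the corresponding
one-letter string, and a pair rule `(j, k)` evaluates to the concatenation
of the evaluations of the (earlier) rules `R_j` and `R_k`. -/
def SLP.evals {α : Type*} (G : SLP α) : List (List α) :=
  G.rules.foldl (fun acc r =>
    acc ++ [match r with
      | .sym a => [a]
      | .pair j k => acc.getD j [] ++ acc.getD k []]) []

/-- An SLP generates the string which its last rule evaluates to. -/
def SLP.generates {α : Type*} (G : SLP α) (s : List α) : Prop :=
  G.evals.getLast? = some s

/-- Characteristic vector (as a binary string over the alphabet `{0,1}`) of a
set `X ⊆ {1, …, U}`: position `i ∈ {1, …, U}` carries a `1` iff `i ∈ X`. -/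
def charVec2 (U : ℕ) (X : Finset ℕ) : List (Fin 2) :=
  (List.range U).map (fun i => if i + 1 ∈ X then 1 else 0)

namespace SAux

abbrev Rl := SLPRule (Fin 2)

def fstep (acc : List (List (Fin 2))) (r : Rl) : List (List (Fin 2)) :=
  acc ++ [match r with
    | .sym a => [a]
    | .pair j k => acc.getD j [] ++ acc.getD k []]

def ev (rs : List Rl) : List (List (Fin 2)) := rs.foldl fstep []

lemma evals_eq (rs : List Rl) (h) : SLP.evals ⟨rs, h⟩ = ev rs := by
  rw [SLP.evals, ev]
  apply List.foldl_ext
  intro acc r _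
  cases r <;> rfl

lemma length_foldl (l : List Rl) : ∀ acc : List (List (Fin 2)),
    (l.foldl fstep acc).length = acc.length + l.length := by
  induction l with
  | nil => simp
  | cons r l ih =>
    intro acc
    rw [List.foldl_cons, ih (fstep acc r)]
    simp only [fstep, List.length_append, List.length_cons, List.length_nil]
    omega

lemma length_ev (rs : List Rl) : (ev rs).length = rs.length := by
  simpa [ev] using length_foldl rs []

lemma prefix_foldl (l : List Rl) : ∀ acc : List (List (Fin 2)),
    acc <+: l.foldl fstep acc := by
  induction l with
  | nil => intro acc; simp
  | cons r l ih =>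
    intro acc
    exact ((List.prefix_append _ _).trans (ih (fstep acc r)))

lemma ev_append_prefix (rs rs' : List Rl) : ev rs <+: ev (rs ++ rs') := by
  show ev rs <+: List.foldl fstep [] (rs ++ rs')
  rw [List.foldl_append]
  exact prefix_foldl rs' _

lemma ev_snoc (rs : List Rl) (r : Rl) :
    ev (rs ++ [r]) = ev rs ++ [match r with
      | .sym a => [a]
      | .pair j k => (ev rs).getD j [] ++ (ev rs).getD k []] := by
  show List.foldl fstep [] (rs ++ [r]) = _
  rw [List.foldl_append]
  rfl

def Pd (rs : List Rl) (i : ℕ) (s : List (Fin 2)) : Prop := (ev rs)[i]? = some s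

lemma Pd.lt {rs i s} (h : Pd rs i s) : i < rs.length := by
  obtain ⟨hlt, -⟩ := List.getElem?_eq_some_iff.mp h
  rwa [length_ev] at hlt

lemma Pd.mono {rs i s} (h : Pd rs i s) (rs' : List Rl) : Pd (rs ++ rs') i s := by
  obtain ⟨t, ht⟩ := ev_append_prefix rs rs'
  rw [Pd, ← ht, List.getElem?_append_left]
  · exact h
  · rw [length_ev]; exact h.lt

lemma Pd.getD {rs i s} (h : Pd rs i s) : (ev rs).getD i [] = s := by
  rw [List.getD_eq_getElem?_getD, h]; rfl

lemma Pd_snoc_sym (rs : List Rl) (a : Fin 2) : Pd (rs ++ [SLPRule.sym a]) rs.length [a] := by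
  rw [Pd, ev_snoc]
  rw [List.getElem?_append_right (by rw [length_ev]) ]
  rw [length_ev]
  simp

lemma Pd_snoc_pair {rs j k s t} (hs : Pd rs j s) (ht : Pd rs k t) :
    Pd (rs ++ [SLPRule.pair j k]) rs.length (s ++ t) := by
  rw [Pd, ev_snoc]
  rw [List.getElem?_append_right (by rw [length_ev])]
  rw [length_ev]
  simp only [Nat.sub_self]
  have h1 : (ev rs).getD j [] = s := by rw [List.getD_eq_getElem?_getD, hs]; rfl
  have h2 : (ev rs).getD k [] = t := by rw [List.getD_eq_getElem?_getD, ht]; rfl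
  rw [h1, h2]
  rfl

def Wf' (rs : List Rl) : Prop := ∀ i j k, rs[i]? = some (SLPRule.pair j k) → j < i ∧ k < i

lemma Wf'_nil : Wf' [] := by intro i j k h; simp at h

lemma Wf'_snoc_sym {rs} (h : Wf' rs) (a : Fin 2) : Wf' (rs ++ [SLPRule.sym a]) := by
  intro i j k hi
  rcases lt_or_ge i rs.length with hl | hl
  · rw [List.getElem?_append_left hl] at hi
    exact h i j k hi
  · rw [List.getElem?_append_right hl] at hi
    rcases h' : i - rs.length with _ | n
    · rw [h'] at hi
      simp at hi
    · rw [h'] at hi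
      simp at hi

lemma Wf'_snoc_pair {rs j k} (h : Wf' rs) (hj : j < rs.length) (hk : k < rs.length) :
    Wf' (rs ++ [SLPRule.pair j k]) := by
  intro i j' k' hi
  rcases lt_or_ge i rs.length with hl | hl
  · rw [List.getElem?_append_left hl] at hi
    exact h i j' k' hi
  · rw [List.getElem?_append_right hl] at hi
    have hi2 : i < rs.length + 1 := by
      by_contra hc
      push_neg at hc
      rw [List.getElem?_eq_none (by simp; omega)] at hi
      exact absurd hi (by simp)
    have : i = rs.length := by omega
    subst this
    simp at hi
    obtain ⟨h1, h2⟩ := hi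
    constructor <;> omega

lemma wf_of_Wf' {rs : List Rl} (h : Wf' rs) :
    ∀ i : Fin rs.length, match rs.get i with
      | .sym _ => True
      | .pair j k => j < i.val ∧ k < i.val := by
  intro i
  rcases hh : rs.get i with a | ⟨j, k⟩
  · trivial
  · simp only
    apply h i.val j k
    rw [List.getElem?_eq_getElem i.isLt]
    rw [← List.get_eq_getElem, hh]


lemma Pd.mono' {rs rs' : List Rl} {i s} (hp : rs <+: rs') (h : Pd rs i s) : Pd rs' i s := by
  obtain ⟨t, rfl⟩ := hp
  exact h.mono t

lemma push_pair {rs : List Rl} {j k s t} (hw : Wf' rs) (hs : Pd rs j s) (ht : Pd rs k t) :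
    ∃ rs', rs <+: rs' ∧ Wf' rs' ∧ rs'.length = rs.length + 1 ∧
      Pd rs' rs.length (s ++ t) := by
  refine ⟨rs ++ [SLPRule.pair j k], List.prefix_append _ _,
    Wf'_snoc_pair hw hs.lt ht.lt, by simp, Pd_snoc_pair hs ht⟩

def mkSLP (rs : List Rl) (h : Wf' rs) : SLP (Fin 2) :=
  ⟨rs, by
    intro i
    rcases hh : rs.get i with a | ⟨j, k⟩
    · simp only [hh]
    · simp only [hh]
      exact h i j k (by rw [List.getElem?_eq_getElem i.isLt, ← List.get_eq_getElem, hh])⟩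

lemma generates_of_Pd {rs : List Rl} {i s} (hw : Wf' rs) (h : Pd rs i s)
    (hi : i + 1 = rs.length) :
    SLP.generates (mkSLP rs hw) s := by
  rw [SLP.generates, mkSLP, evals_eq, List.getLast?_eq_getElem?, length_ev]
  have : rs.length - 1 = i := by omega
  rw [this]
  exact h

lemma build_rep {rs : List Rl} {i0 : ℕ} (hw : Wf' rs) (h0 : Pd rs i0 [(0:Fin 2)]) :
    ∀ r : ℕ, 1 ≤ r →
    ∃ rs' j, rs <+: rs' ∧ Wf' rs' ∧ rs'.length ≤ rs.length + 2 * Nat.log 2 r ∧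
      Pd rs' j (List.replicate r (0:Fin 2)) := by
  intro r
  induction r using Nat.strong_induction_on with
  | _ r ih =>
    intro hr
    rcases eq_or_lt_of_le hr with h1 | h2
    · exact ⟨rs, i0, List.prefix_rfl, hw, by omega, by rw [← h1]; exact h0⟩
    · -- r ≥ 2
      have hq1 : 1 ≤ r / 2 := by omega
      have hqr : r / 2 < r := by omega
      obtain ⟨rs₁, j₁, hp₁, hw₁, hl₁, hd₁⟩ := ih (r / 2) hqr hq1
      obtain ⟨rs₂, hp₂, hw₂, hl₂, hd₂⟩ := push_pair hw₁ hd₁ hd₁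
      have hlog2 : 0 < Nat.log 2 r := Nat.log_pos (by norm_num) (by omega)
      have hlog : Nat.log 2 (r / 2) + 1 = Nat.log 2 r := by
        rw [Nat.log_div_base]
        omega
      have hrep2 : (List.replicate (r/2) (0:Fin 2)) ++ List.replicate (r/2) (0:Fin 2)
          = List.replicate (r/2 + r/2) (0:Fin 2) := (List.replicate_add _ _ _).symm
      rcases Nat.even_or_odd r with he | ho
      · have hr2 : r/2 + r/2 = r := by
          obtain ⟨t, rfl⟩ := he; omega
        refine ⟨rs₂, rs₁.length, hp₁.trans hp₂, hw₂, by omega, ?_⟩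
        rw [hrep2, hr2] at hd₂
        exact hd₂
      · have hr2 : r/2 + r/2 + 1 = r := by
          obtain ⟨t, ht⟩ := ho; omega
        have h0₂ : Pd rs₂ i0 [(0:Fin 2)] := Pd.mono' (hp₁.trans hp₂) h0
        rw [hrep2] at hd₂
        obtain ⟨rs₃, hp₃, hw₃, hl₃, hd₃⟩ := push_pair hw₂ hd₂ h0₂
        refine ⟨rs₃, rs₂.length, (hp₁.trans hp₂).trans hp₃, hw₃, by omega, ?_⟩
        rw [← List.replicate_succ'] at hd₃
        rwa [hr2] at hd₃


lemma build_chain {rs : List Rl} {i0 ic : ℕ} {c : List (Fin 2)}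
    (hw : Wf' rs) (h0 : Pd rs i0 [(0:Fin 2)]) (hc : Pd rs ic c)
    (g : ℕ → ℕ) (G : ℕ) (n : ℕ) (hg : ∀ i < n, 1 ≤ g i ∧ g i ≤ G) :
    ∃ rs' j, rs <+: rs' ∧ Wf' rs' ∧
      rs'.length ≤ rs.length + n * (2 * Nat.log 2 G + 2) ∧
      Pd rs' j (c ++ ((List.range n).map
        (fun i => List.replicate (g i) (0:Fin 2) ++ c)).flatten) ∧
      (1 ≤ n → j + 1 = rs'.length) := by
  induction n with
  | zero => exact ⟨rs, ic, List.prefix_rfl, hw, by omega, by simpa using hc, by omega⟩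
  | succ n ih =>
    obtain ⟨rs₁, j₁, hp₁, hw₁, hl₁, hd₁, -⟩ := ih (fun i hi => hg i (by omega))
    obtain ⟨hg1, hg2⟩ := hg n (by omega)
    obtain ⟨rs₂, j₂, hp₂, hw₂, hl₂, hd₂⟩ := build_rep hw₁ (Pd.mono' hp₁ h0) (g n) hg1
    obtain ⟨rs₃, hp₃, hw₃, hl₃, hd₃⟩ := push_pair hw₂ hd₂ (Pd.mono' (hp₁.trans hp₂) hc)
    obtain ⟨rs₄, hp₄, hw₄, hl₄, hd₄⟩ := push_pair hw₃ (Pd.mono' (hp₂.trans hp₃) hd₁) hd₃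
    refine ⟨rs₄, rs₃.length, hp₁.trans ((hp₂.trans hp₃).trans hp₄), hw₄, ?_, ?_, fun _ => by omega⟩
    · have hlm : Nat.log 2 (g n) ≤ Nat.log 2 G := Nat.log_mono_right hg2
      have h1 : rs₄.length ≤ rs₁.length + (2 * Nat.log 2 G + 2) := by omega
      calc rs₄.length ≤ rs₁.length + (2 * Nat.log 2 G + 2) := h1
        _ ≤ (rs.length + n * (2 * Nat.log 2 G + 2)) + (2 * Nat.log 2 G + 2) :=
            Nat.add_le_add_right hl₁ _
        _ = rs.length + (n + 1) * (2 * Nat.log 2 G + 2) := by ring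
    · have heq : c ++ ((List.range (n+1)).map
          (fun i => List.replicate (g i) (0:Fin 2) ++ c)).flatten
          = (c ++ ((List.range n).map
              (fun i => List.replicate (g i) (0:Fin 2) ++ c)).flatten)
            ++ (List.replicate (g n) (0:Fin 2) ++ c) := by
        simp [List.range_succ, List.append_assoc]
      rw [heq]
      exact hd₄


/-! ### Pure list lemmas -/

abbrev rp (r : ℕ) : List (Fin 2) := List.replicate r (0 : Fin 2)

lemma rp_add (a b : ℕ) : rp (a + b) = rp a ++ rp b := List.replicate_add _ _ _

lemma shift_flatten (C : List (Fin 2)) (s : ℕ → ℕ) (x t : ℕ) :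
    ∀ n, (∀ r < n, x + s r ≤ t) →
    ((List.range n).map (fun r => rp (x + s r) ++ C ++ rp (t - x - s r))).flatten ++ rp x
    = rp x ++ ((List.range n).map (fun r => rp (s r) ++ C ++ rp (t - s r))).flatten := by
  intro n
  induction n with
  | zero => simp
  | succ n ih =>
    intro hn
    have IH := ih (fun r hr => hn r (by omega))
    have h1 : rp (t - x - s n) ++ rp x = rp (t - s n) := by
      rw [← rp_add]
      congr 1
      have := hn n (by omega)
      omega
    have h2 : rp (x + s n) = rp x ++ rp (s n) := rp_add x (s n)
    simp only [List.range_succ, List.map_append, List.flatten_append, List.map_cons,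
      List.map_nil, List.flatten_cons, List.flatten_nil, List.append_nil, List.append_assoc]
    simp only [List.append_assoc] at IH
    rw [h1, h2, List.append_assoc (rp x) (rp (s n)), ← List.append_assoc _ (rp x), IH,
      List.append_assoc]

lemma chunks_to_chain (c : List (Fin 2)) (β : ℕ → ℕ) (u : ℕ) :
    ∀ p, ((List.range (p+1)).map (fun q => rp (β q) ++ c ++ rp (u - β q))).flatten
    = (rp (β 0) ++ c ++ ((List.range p).map
        (fun i => rp ((u - β i) + β (i+1)) ++ c)).flatten) ++ rp (u - β p) := by
  intro p
  induction p with
  | zero => simp [List.range_succ, List.append_assoc]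
  | succ p ih =>
    have hmerge : rp (u - β p) ++ rp (β (p+1)) = rp ((u - β p) + β (p+1)) := (rp_add _ _).symm
    calc ((List.range (p+2)).map (fun q => rp (β q) ++ c ++ rp (u - β q))).flatten
        = ((List.range (p+1)).map (fun q => rp (β q) ++ c ++ rp (u - β q))).flatten
          ++ (rp (β (p+1)) ++ c ++ rp (u - β (p+1))) := by
          simp [List.range_succ, List.append_assoc]
      _ = (rp (β 0) ++ c ++ ((List.range p).map
            (fun i => rp ((u - β i) + β (i+1)) ++ c)).flatten) ++ rp (u - β p)
          ++ (rp (β (p+1)) ++ c ++ rp (u - β (p+1))) := by rw [ih]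
      _ = (rp (β 0) ++ c ++ ((List.range (p+1)).map
            (fun i => rp ((u - β i) + β (i+1)) ++ c)).flatten) ++ rp (u - β (p+1)) := by
          simp only [List.range_succ, List.map_append, List.flatten_append, List.map_cons,
            List.map_nil, List.flatten_cons, List.flatten_nil, List.append_nil,
            List.append_assoc, ← hmerge]

lemma range_mul_flatten (F : ℕ → List (Fin 2)) : ∀ (M N : ℕ),
    ((List.range (M * N)).map F).flatten
    = ((List.range M).map
        (fun q => ((List.range N).map (fun r => F (q * N + r))).flatten)).flatten := by
  intro M N
  induction M with
  | zero => simp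
  | succ M ih =>
    have h1 : (M + 1) * N = M * N + N := by ring
    rw [h1, List.range_add, List.map_append, List.flatten_append, ih]
    simp [List.range_succ, List.append_assoc, Function.comp_def]

lemma digit_top (m e q r : ℕ) (hq : q < m) (hr : r < m ^ e) :
    (q * m ^ e + r) / m ^ e % m = q := by
  have hm : 0 < m := by omega
  have hpow : 0 < m ^ e := Nat.pow_pos hm
  rw [add_comm, Nat.add_mul_div_right _ _ hpow, Nat.div_eq_of_lt hr]
  simpa using Nat.mod_eq_of_lt hq

lemma digit_split (m e q r d : ℕ) (hm : 0 < m) (hr : r < m ^ e) (hd : d < e) :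
    (q * m ^ e + r) / m ^ (e - 1 - d) % m = r / m ^ (e - 1 - d) % m := by
  have hpow : 0 < m ^ (e - 1 - d) := Nat.pow_pos hm
  have hsplit : m ^ e = m ^ (d + 1) * m ^ (e - 1 - d) := by
    rw [← pow_add]
    congr 1
    omega
  have h1 : q * m ^ e + r = r + (q * m ^ (d + 1)) * m ^ (e - 1 - d) := by
    rw [hsplit]; ring
  rw [h1, Nat.add_mul_div_right _ _ hpow]
  have h2 : q * m ^ (d + 1) = (q * m ^ d) * m := by
    rw [pow_succ]; ring
  rw [h2, Nat.add_mul_mod_self_right]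


lemma map_range_zeros (f : ℕ → Fin 2) (p d : ℕ)
    (h0 : ∀ i, p ≤ i → i < p + d → f i = 0) :
    (List.range (p + d)).map f = (List.range p).map f ++ rp d := by
  rw [List.range_add, List.map_append, List.map_map]
  congr 1
  have hlen : ((List.range d).map (f ∘ (p + ·))).length = d := by simp
  rw [show rp d = List.replicate ((List.range d).map (f ∘ (p + ·))).length (0:Fin 2) by
    rw [hlen]]
  apply List.eq_replicate_of_mem
  intro b hb
  simp only [List.mem_map, List.mem_range, Function.comp] at hb
  obtain ⟨i, hi, rfl⟩ := hb
  exact h0 (p + i) (by omega) (by omega)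

lemma map_range_block (f : ℕ → Fin 2) (p d : ℕ)
    (h0 : ∀ i, p ≤ i → i < p + d → f i = 0) (h1 : f (p + d) = 1) :
    (List.range (p + d + 1)).map f = ((List.range p).map f ++ rp d) ++ [(1:Fin 2)] := by
  rw [List.range_succ, List.map_append, map_range_zeros f p d h0]
  simp [h1]

lemma build_C (m U : ℕ) (hm : 1 ≤ m) (A : ℕ → ℕ)
    (hmono : ∀ j j', j < j' → j' < m → A j < A j')
    (hrange : ∀ j < m, 1 ≤ A j ∧ A j ≤ U)
    (G : ℕ) (hUG : U ≤ G) :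
    ∃ rs i0 ic, Wf' rs ∧ Pd rs i0 [(0:Fin 2)] ∧
      Pd rs ic (charVec2 U (Finset.image A (Finset.range m))) ∧
      rs.length ≤ 2 + (m + 1) * (2 * Nat.log 2 G + 2) := by
  set L := Nat.log 2 G with hL
  have monole : ∀ j j', j ≤ j' → j' < m → A j ≤ A j' := by
    intro j j' hle hlt
    rcases eq_or_lt_of_le hle with rfl | h
    · exact le_rfl
    · exact (hmono j j' h hlt).le
  set f : ℕ → Fin 2 := fun i =>
    if i + 1 ∈ Finset.image A (Finset.range m) then 1 else 0 with hf
  have hCv : charVec2 U (Finset.image A (Finset.range m)) = (List.range U).map f := rfl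
  have hmem : ∀ i : ℕ, (i + 1 ∈ Finset.image A (Finset.range m)) ↔ ∃ j < m, A j = i + 1 := by
    intro i
    simp [Finset.mem_image]
  have hf1 : ∀ j < m, f (A j - 1) = 1 := by
    intro j hj
    have h1 := (hrange j hj).1
    have heq : A j - 1 + 1 = A j := by omega
    rw [hf]
    simp only [heq]
    rw [if_pos]
    exact Finset.mem_image.mpr ⟨j, Finset.mem_range.mpr hj, rfl⟩
  have hf0 : ∀ i lo hi, (∀ j < m, A j ≤ lo ∨ hi ≤ A j) → lo ≤ i → i + 1 < hi → lo < i + 1 →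
      f i = 0 := by
    intro i lo hi hsep h1 h2 h3
    rw [hf]
    simp only
    rw [if_neg]
    rw [hmem]
    rintro ⟨j', hj', hAj'⟩
    rcases hsep j' hj' with h | h <;> omega
  -- initial program
  have hwf0 : Wf' [SLPRule.sym (0:Fin 2), SLPRule.sym (1:Fin 2)] := by
    intro i j k h
    rcases i with _ | _ | i <;> simp_all
  have hd00 : Pd [SLPRule.sym (0:Fin 2), SLPRule.sym (1:Fin 2)] 0 [(0:Fin 2)] := by
    have := (Pd_snoc_sym [] (0:Fin 2)).mono [SLPRule.sym (1:Fin 2)]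
    simpa using this
  have hd01 : Pd [SLPRule.sym (0:Fin 2), SLPRule.sym (1:Fin 2)] 1 [(1:Fin 2)] := by
    have := Pd_snoc_sym [SLPRule.sym (0:Fin 2)] (1:Fin 2)
    simpa using this
  set rs0 : List Rl := [SLPRule.sym (0:Fin 2), SLPRule.sym (1:Fin 2)] with hrs0
  have hlen0 : rs0.length = 2 := rfl
  -- step combinator: append (rp d ++ [1]) to an existing string
  have step : ∀ (rs : List Rl) (ic : ℕ) (s : List (Fin 2)) (d : ℕ), Wf' rs → rs0 <+: rs →
      Pd rs ic s → d ≤ G →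
      ∃ rs' ic', rs <+: rs' ∧ Wf' rs' ∧ rs'.length ≤ rs.length + (2 * L + 2) ∧
        Pd rs' ic' ((s ++ rp d) ++ [(1:Fin 2)]) := by
    intro rs ic s d hw hp hd hdG
    have h1 : Pd rs 1 [(1:Fin 2)] := Pd.mono' hp hd01
    rcases Nat.eq_zero_or_pos d with rfl | hdpos
    · obtain ⟨rs', hp', hw', hl', hd'⟩ := push_pair hw hd h1
      exact ⟨rs', rs.length, hp', hw', by omega, by simpa using hd'⟩
    · obtain ⟨rs₁, j₁, hp₁, hw₁, hl₁, hd₁⟩ := build_rep hw (Pd.mono' hp hd00) d hdpos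
      obtain ⟨rs₂, hp₂, hw₂, hl₂, hd₂⟩ := push_pair hw₁ (Pd.mono' hp₁ hd) hd₁
      obtain ⟨rs₃, hp₃, hw₃, hl₃, hd₃⟩ := push_pair hw₂ hd₂ (Pd.mono' (hp₁.trans hp₂) h1)
      have hlog : Nat.log 2 d ≤ L := Nat.log_mono_right hdG
      refine ⟨rs₃, rs₂.length, hp₁.trans (hp₂.trans hp₃), hw₃, by omega, ?_⟩
      exact hd₃
  -- induction over j
  have main : ∀ j < m, ∃ rs ic, rs0 <+: rs ∧ Wf' rs ∧
      rs.length ≤ 2 + (j + 1) * (2 * L + 2) ∧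
      Pd rs ic ((List.range (A j)).map f) := by
    intro j
    induction j with
    | zero =>
      intro hj
      have hA1 := (hrange 0 hj).1
      have hA2 := (hrange 0 hj).2
      have key : (List.range (A 0)).map f = (([] : List (Fin 2)) ++ rp (A 0 - 1)) ++ [1] := by
        have h := map_range_block f 0 (A 0 - 1) ?_ ?_
        · simpa [show A 0 - 1 + 1 = A 0 by omega] using h
        · intro i hi1 hi2
          exact hf0 i 0 (A 0) (fun j' hj' => Or.inr (monole 0 j' (by omega) hj'))
            (by omega) (by omega) (by omega)
        · simpa [show 0 + (A 0 - 1) = A 0 - 1 by omega] using hf1 0 hj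
      -- build: either [1] itself, or rp (A 0 - 1) ++ [1]
      rcases Nat.eq_zero_or_pos (A 0 - 1) with hz | hpos
      · refine ⟨rs0, 1, List.prefix_rfl, hwf0, by omega, ?_⟩
        rw [key, hz]
        simpa using hd01
      · obtain ⟨rs₁, j₁, hp₁, hw₁, hl₁, hd₁⟩ := build_rep hwf0 hd00 (A 0 - 1) hpos
        obtain ⟨rs₂, hp₂, hw₂, hl₂, hd₂⟩ := push_pair hw₁ hd₁ (Pd.mono' hp₁ hd01)
        have hlog : Nat.log 2 (A 0 - 1) ≤ L := Nat.log_mono_right (by omega)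
        refine ⟨rs₂, rs₁.length, hp₁.trans hp₂, hw₂, by omega, ?_⟩
        rw [key]
        simpa using hd₂
    | succ j ih =>
      intro hj
      obtain ⟨rs, ic, hp, hw, hl, hd⟩ := ih (by omega)
      have hmj := hmono j (j+1) (by omega) hj
      have hA2 := (hrange (j+1) hj).2
      have key : (List.range (A (j+1))).map f
          = (((List.range (A j)).map f) ++ rp (A (j+1) - A j - 1)) ++ [1] := by
        have h := map_range_block f (A j) (A (j+1) - A j - 1) ?_ ?_
        · simpa [show A j + (A (j+1) - A j - 1) + 1 = A (j+1) by omega] using h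
        · intro i hi1 hi2
          refine hf0 i (A j) (A (j+1)) (fun j' hj' => ?_) (by omega) (by omega) (by omega)
          rcases Nat.lt_or_ge j' (j+1) with h' | h'
          · exact Or.inl (monole j' j (by omega) (by omega))
          · exact Or.inr (by have := monole (j+1) j' h' hj'; omega)
        · have harg : A j + (A (j+1) - A j - 1) = A (j+1) - 1 := by omega
          rw [harg]
          exact hf1 (j+1) hj
      obtain ⟨rs', ic', hp', hw', hl', hd'⟩ :=
        step rs ic _ (A (j+1) - A j - 1) hw hp hd (by omega)
      refine ⟨rs', ic', hp.trans hp', hw', ?_, ?_⟩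
      · calc rs'.length ≤ rs.length + (2*L+2) := hl'
          _ ≤ (2 + (j+1)*(2*L+2)) + (2*L+2) := Nat.add_le_add_right hl _
          _ = 2 + (j+1+1)*(2*L+2) := by ring
      · rw [key]
        exact hd'
  -- final padding up to U
  obtain ⟨rs, ic, hp, hw, hl, hd⟩ := main (m-1) (by omega)
  have hA1 := (hrange (m-1) (by omega)).1
  have hA2 := (hrange (m-1) (by omega)).2
  have keyU : (List.range U).map f = ((List.range (A (m-1))).map f) ++ rp (U - A (m-1)) := by
    have h := map_range_zeros f (A (m-1)) (U - A (m-1)) ?_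
    · simpa [show A (m-1) + (U - A (m-1)) = U by omega] using h
    · intro i hi1 hi2
      refine hf0 i (A (m-1)) (U+1) (fun j' hj' => Or.inl (monole j' (m-1) (by omega) (by omega)))
        (by omega) (by omega) (by omega)
  have hm1 : m - 1 + 1 = m := by omega
  rw [hm1] at hl
  have hlbound : 2 + m * (2*L+2) ≤ 2 + (m+1) * (2*L+2) :=
    Nat.add_le_add_left (Nat.mul_le_mul_right _ (Nat.le_succ m)) 2
  rcases Nat.eq_zero_or_pos (U - A (m-1)) with hz | hpos
  · refine ⟨rs, 0, ic, hw, Pd.mono' hp hd00, ?_, hl.trans hlbound⟩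
    rw [hCv, keyU, hz]
    simpa using hd
  · obtain ⟨rs₁, j₁, hp₁, hw₁, hl₁, hd₁⟩ := build_rep hw (Pd.mono' hp hd00) (U - A (m-1)) hpos
    obtain ⟨rs₂, hp₂, hw₂, hl₂, hd₂⟩ := push_pair hw₁ (Pd.mono' hp₁ hd) hd₁
    have hlog : Nat.log 2 (U - A (m-1)) ≤ L := Nat.log_mono_right (by omega)
    refine ⟨rs₂, 0, rs₁.length, hw₂,
      Pd.mono' (hp.trans (hp₁.trans hp₂)) hd00, ?_, ?_⟩
    · rw [hCv, keyU]
      exact hd₂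
    · calc rs₂.length ≤ rs.length + (2*L+2) := by omega
        _ ≤ (2 + m*(2*L+2)) + (2*L+2) := Nat.add_le_add_right hl _
        _ = 2 + (m+1)*(2*L+2) := by ring


/-! ### The main recursive construction -/

def SeD (k m : ℕ) (a : ℕ → ℕ → ℕ) (e j : ℕ) : ℕ :=
  ∑ d ∈ Finset.range e, a (k-2-e+d) (j / m ^ (e-1-d) % m)

def MeD (k m : ℕ) (a : ℕ → ℕ → ℕ) (e : ℕ) : ℕ :=
  ∑ d ∈ Finset.range e, a (k-2-e+d) (m-1)

def VeD (k m U : ℕ) (a : ℕ → ℕ → ℕ) (C : List (Fin 2)) (e : ℕ) : List (Fin 2) :=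
  ((List.range (m^e)).map (fun j =>
    rp (SeD k m a e j) ++ C ++ rp ((k-2)*U - SeD k m a e j))).flatten

lemma main_build (k m U : ℕ) (hk : 3 ≤ k) (hm : 2 ≤ m) (hU : 2 ≤ U)
    (a : ℕ → ℕ → ℕ)
    (hmono : ∀ i ≤ k-2, ∀ j j' : ℕ, j < j' → j' < m → a i j < a i j')
    (hrange : ∀ i ≤ k-2, ∀ j < m, 1 ≤ a i j ∧ a i j ≤ U)
    (C : List (Fin 2))
    (rs0 : List Rl) (hw0 : Wf' rs0) (i0 ic : ℕ)
    (h00 : Pd rs0 i0 [(0:Fin 2)]) (h0c : Pd rs0 ic C) :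
    ∀ e, e ≤ k - 2 → ∃ rs j co, rs0 <+: rs ∧ Wf' rs ∧
      rs.length ≤ rs0.length + e * (m * (2 * Nat.log 2 ((k-1)*U) + 2)) ∧
      Pd rs j co ∧ (1 ≤ e → j + 1 = rs.length) ∧
      co ++ rp ((k-2)*U - MeD k m a e) = VeD k m U a C e := by
  have amono_le : ∀ i ≤ k-2, ∀ j j', j ≤ j' → j' < m → a i j ≤ a i j' := by
    intro i hi j j' hle hlt
    rcases eq_or_lt_of_le hle with rfl | h
    · exact le_rfl
    · exact (hmono i hi j j' h hlt).le
  set T : ℕ := (k-2)*U with hT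
  set GG : ℕ := (k-1)*U with hGG
  set L : ℕ := Nat.log 2 GG with hLdef
  have hTG : T + U = GG := by
    rw [hT, hGG]
    have : k - 1 = (k-2) + 1 := by omega
    rw [this]
    ring
  have hMe_le : ∀ e ≤ k-2, MeD k m a e ≤ e * U := by
    intro e he
    rw [MeD]
    calc ∑ d ∈ Finset.range e, a (k-2-e+d) (m-1)
        ≤ ∑ _d ∈ Finset.range e, U := by
          apply Finset.sum_le_sum
          intro d hd
          simp only [Finset.mem_range] at hd
          exact (hrange (k-2-e+d) (by omega) (m-1) (by omega)).2
      _ = e * U := by simp [Finset.sum_const, Finset.card_range, Nat.smul_one_eq_cast]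
  have hSe_le : ∀ e ≤ k-2, ∀ j, SeD k m a e j ≤ MeD k m a e := by
    intro e he j
    rw [SeD, MeD]
    apply Finset.sum_le_sum
    intro d hd
    simp only [Finset.mem_range] at hd
    apply amono_le (k-2-e+d) (by omega)
    · have : j / m ^ (e-1-d) % m < m := Nat.mod_lt _ (by omega)
      omega
    · omega
  intro e
  induction e with
  | zero =>
    intro _
    refine ⟨rs0, ic, C, List.prefix_rfl, hw0, by omega, h0c, by omega, ?_⟩
    simp [VeD, SeD, MeD, List.range_succ, hT]
  | succ e ih =>
    intro he1
    have hidx1 : ∀ d : ℕ, k-2-(e+1)+(d+1) = k-2-e+d := by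
      intro d
      omega
    obtain ⟨rs, jh, co, hp, hw, hl, hd, -, hco⟩ := ih (by omega)
    set β : ℕ → ℕ := fun q => a (k-2-(e+1)) q with hβ
    have hβr : ∀ q < m, 1 ≤ β q ∧ β q ≤ U := fun q hq => hrange (k-2-(e+1)) (by omega) q hq
    set u : ℕ := T - MeD k m a e with hu
    have hMee : MeD k m a e ≤ e * U := hMe_le e (by omega)
    have hMeU : MeD k m a e + U ≤ T := by
      have : (e+1) * U ≤ (k-2) * U := Nat.mul_le_mul_right U (by omega)
      have h2 : e * U + U = (e+1)*U := by ring
      omega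
    have hβu : ∀ q < m, β q ≤ u := by
      intro q hq
      have := (hβr q hq).2
      omega
    -- Me recursion
    have hMerec : MeD k m a (e+1) = β (m-1) + MeD k m a e := by
      rw [MeD, MeD, Finset.sum_range_succ']
      have h1 : ∀ d ∈ Finset.range e, a (k-2-(e+1)+(d+1)) (m-1) = a (k-2-e+d) (m-1) := by
        intro d hd
        rw [hidx1 d]
      rw [Finset.sum_congr rfl h1, show k-2-(e+1)+0 = k-2-(e+1) from rfl]
      have h0 : a (k-2-(e+1)) (m-1) = β (m-1) := rfl
      rw [h0]
      omega
    -- Se recursion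
    have hSerec : ∀ q < m, ∀ r < m^e,
        SeD k m a (e+1) (q * m^e + r) = β q + SeD k m a e r := by
      intro q hq r hr
      rw [SeD, SeD, Finset.sum_range_succ']
      have h1 : ∀ d ∈ Finset.range e,
          a (k-2-(e+1)+(d+1)) ((q * m^e + r) / m ^ (e+1-1-(d+1)) % m)
          = a (k-2-e+d) (r / m ^ (e-1-d) % m) := by
        intro d hd
        simp only [Finset.mem_range] at hd
        have hexp : e+1-1-(d+1) = e-1-d := by omega
        rw [hexp, digit_split m e q r d (by omega) hr hd, hidx1 d]
      rw [Finset.sum_congr rfl h1]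
      have h0 : a (k-2-(e+1)+0) ((q * m^e + r) / m ^ (e+1-1-0) % m) = β q := by
        have hexp : e+1-1-0 = e := by omega
        rw [hexp, digit_top m e q r hq hr, show k-2-(e+1)+0 = k-2-(e+1) from rfl]
      rw [h0]
      omega
    -- builder: chain then prepend
    obtain ⟨rs₁, j₁, hp₁, hw₁, hl₁, hd₁, hlast₁⟩ :=
      build_chain hw (Pd.mono' hp h00) hd
        (fun i => (u - β i) + β (i+1)) GG (m-1)
        (by
          intro i hi
          constructor
          · show 1 ≤ (u - β i) + β (i+1)
            have := (hβr (i+1) (by omega)).1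
            omega
          · show (u - β i) + β (i+1) ≤ GG
            have h1 := hβu (i+1) (by omega)
            have h2 : u ≤ T := by omega
            have := (hβr (i+1) (by omega)).2
            omega)
    obtain ⟨rs₂, j₂, hp₂, hw₂, hl₂, hd₂⟩ :=
      build_rep hw₁ (Pd.mono' (hp.trans hp₁) h00) (β 0) (hβr 0 (by omega)).1
    obtain ⟨rs₃, hp₃, hw₃, hl₃, hd₃⟩ := push_pair hw₂ hd₂ (Pd.mono' hp₂ hd₁)
    refine ⟨rs₃, rs₂.length, _, hp.trans (hp₁.trans (hp₂.trans hp₃)), hw₃, ?_, hd₃,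
      fun _ => by omega, ?_⟩
    · -- size
      have hlogβ : Nat.log 2 (β 0) ≤ L := Nat.log_mono_right (by
        have := (hβr 0 (by omega)).2
        omega)
      calc rs₃.length = rs₂.length + 1 := hl₃
        _ ≤ rs₁.length + 2 * Nat.log 2 (β 0) + 1 := by omega
        _ ≤ rs₁.length + (2 * L + 2) := by omega
        _ ≤ (rs.length + (m-1) * (2*L+2)) + (2*L+2) := Nat.add_le_add_right hl₁ _
        _ = rs.length + (m-1+1) * (2*L+2) := by ring
        _ = rs.length + m * (2*L+2) := by rw [show m-1+1 = m by omega]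
        _ ≤ (rs0.length + e * (m * (2*L+2))) + m * (2*L+2) := Nat.add_le_add_right hl _
        _ = rs0.length + (e+1) * (m * (2*L+2)) := by ring
    · -- string identity
      have hpow : m ^ (e+1) = m * m ^ e := by rw [pow_succ]; ring
      have hstep1 : VeD k m U a C (e+1)
          = ((List.range m).map (fun q => ((List.range (m^e)).map
              (fun r => rp (SeD k m a (e+1) (q * m^e + r)) ++ C
                ++ rp (T - SeD k m a (e+1) (q * m^e + r)))).flatten)).flatten := by
        rw [VeD, hpow, range_mul_flatten]
      have hVeq : ((List.range (m^e)).map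
            (fun r => rp (SeD k m a e r) ++ C ++ rp (T - SeD k m a e r))).flatten
          = VeD k m U a C e := rfl
      have hinner : ∀ q < m, ((List.range (m^e)).map
              (fun r => rp (SeD k m a (e+1) (q * m^e + r)) ++ C
                ++ rp (T - SeD k m a (e+1) (q * m^e + r)))).flatten
          = rp (β q) ++ co ++ rp (u - β q) := by
        intro q hq
        have hmapeq : ((List.range (m^e)).map
              (fun r => rp (SeD k m a (e+1) (q * m^e + r)) ++ C
                ++ rp (T - SeD k m a (e+1) (q * m^e + r)))).flatten
            = ((List.range (m^e)).map
              (fun r => rp (β q + SeD k m a e r) ++ C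
                ++ rp (T - β q - SeD k m a e r))).flatten := by
          congr 1
          apply List.map_congr_left
          intro r hr
          simp only [List.mem_range] at hr
          rw [hSerec q hq r hr, Nat.sub_sub]
        have hshift := shift_flatten C (SeD k m a e) (β q) T (m^e)
          (fun r _ => by
            have h1 := hSe_le e (by omega) r
            have h2 := (hβr q hq).2
            omega)
        have hfinal : ((List.range (m^e)).map
              (fun r => rp (SeD k m a (e+1) (q * m^e + r)) ++ C
                ++ rp (T - SeD k m a (e+1) (q * m^e + r)))).flatten ++ rp (β q)
            = (rp (β q) ++ co ++ rp (u - β q)) ++ rp (β q) := by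
          have hsum : (u - β q) + β q = u := by
            have := hβu q hq
            omega
          rw [hmapeq, hshift, hVeq, ← hco]
          simp only [List.append_assoc]
          rw [← rp_add, hsum]
        exact List.append_cancel_right hfinal
      have hstep2 : VeD k m U a C (e+1)
          = ((List.range m).map (fun q => rp (β q) ++ co ++ rp (u - β q))).flatten := by
        rw [hstep1]
        congr 1
        apply List.map_congr_left
        intro q hq
        simp only [List.mem_range] at hq
        exact hinner q hq
      have hchunks := chunks_to_chain co β u (m-1)
      rw [show m-1+1 = m by omega] at hchunks
      calc (rp (β 0) ++ (co ++ ((List.range (m-1)).map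
              (fun i => rp ((u - β i) + β (i+1)) ++ co)).flatten))
            ++ rp (T - MeD k m a (e+1))
          = (rp (β 0) ++ co ++ ((List.range (m-1)).map
              (fun i => rp ((u - β i) + β (i+1)) ++ co)).flatten) ++ rp (u - β (m-1)) := by
            rw [show T - MeD k m a (e+1) = u - β (m-1) by
              rw [hMerec]
              omega]
            simp [List.append_assoc]
        _ = ((List.range m).map (fun q => rp (β q) ++ co ++ rp (u - β q))).flatten :=
            hchunks.symm
        _ = VeD k m U a C (e+1) := hstep2.symm


lemma le_of_strictmono (m U : ℕ) (A : ℕ → ℕ)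
    (hmono : ∀ j j', j < j' → j' < m → A j < A j')
    (hrange : ∀ j < m, 1 ≤ A j ∧ A j ≤ U) (hm : 1 ≤ m) : m ≤ U := by
  have hstep : ∀ j < m, j + 1 ≤ A j := by
    intro j
    induction j with
    | zero => intro hj; exact (hrange 0 hj).1
    | succ j ihj =>
      intro hj
      have h1 := ihj (by omega)
      have h2 := hmono j (j+1) (by omega) hj
      omega
  have h3 := hstep (m-1) (by omega)
  have h4 := (hrange (m-1) (by omega)).2
  omega


end SAux

/-- there is a constant `c > 0` such that for all `k ≥ 3`,
`m, U ≥ 2` with `k ≤ m`, and all sets `A_1, …, A_{k-1}` of `m` integers in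
`{1, …, U}` (given 0-indexed by sorted enumerations `a i`, `i ≤ k-2`), there is
an SLP over `{0,1}` of size at most `c · k · m · log₂ U` generating
`v'_{A_1+⋯+A_{k-1}} = ⋃_{(a_1,…,a_{k-2}) lex} 0^{Σ} v_{A_{k-1}} 0^{(k-2)U - Σ}`. -/
theorem stmt3 :
    ∃ c : ℝ, 0 < c ∧
      ∀ k m U : ℕ, 3 ≤ k → 2 ≤ m → 2 ≤ U → k ≤ m →
      ∀ a : ℕ → ℕ → ℕ,
        (∀ i ≤ k - 2, ∀ j j' : ℕ, j < j' → j' < m → a i j < a i j') →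
        (∀ i ≤ k - 2, ∀ j < m, a i j ∈ Finset.Icc 1 U) →
        -- sum of the tuple of `A_1 × ⋯ × A_{k-2}` encoded, in lexicographic
        -- order, by the block index `j < m^(k-2)`
        let S : ℕ → ℕ := fun j =>
          ∑ d ∈ Finset.range (k - 2), a d (j / m ^ (k - 2 - 1 - d) % m)
        let v : List (Fin 2) := ((List.range (m ^ (k - 2))).map (fun j =>
          List.replicate (S j) 0
            ++ charVec2 U (Finset.image (a (k - 2)) (Finset.range m))
            ++ List.replicate ((k - 2) * U - S j) 0)).flatten
        ∃ G : SLP (Fin 2), G.generates v ∧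
          (G.size : ℝ) ≤ c * k * m * Real.logb 2 U := by
  classical
  refine ⟨12, by norm_num, ?_⟩
  intro k m U hk hm hU hkm a hmono hmemb
  intro S v
  set C : List (Fin 2) := charVec2 U (Finset.image (a (k-2)) (Finset.range m)) with hC
  have hrange : ∀ i ≤ k-2, ∀ j < m, 1 ≤ a i j ∧ a i j ≤ U := by
    intro i hi j hj
    have := hmemb i hi j hj
    rw [Finset.mem_Icc] at this
    exact this
  set GG : ℕ := (k-1)*U with hGG
  set L : ℕ := Nat.log 2 GG with hL
  have hUG : U ≤ GG := Nat.le_mul_of_pos_left U (by omega)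
  obtain ⟨rs0, i0, ic, hw0, h00, h0c, hl0⟩ :=
    SAux.build_C m U (by omega) (a (k-2)) (hmono (k-2) le_rfl)
      (fun j hj => hrange (k-2) le_rfl j hj) GG hUG
  obtain ⟨rs, jf, co, hp, hw, hl, hd, hlast, hco⟩ :=
    SAux.main_build k m U hk hm hU a hmono hrange C rs0 hw0 i0 ic h00 h0c (k-2) le_rfl
  have hlast' := hlast (by omega)
  -- identify VeD with v
  have hVe : SAux.VeD k m U a C (k-2) = v := by
    show SAux.VeD k m U a C (k-2)
      = ((List.range (m ^ (k - 2))).map (fun j =>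
          List.replicate (S j) 0 ++ C ++ List.replicate ((k - 2) * U - S j) 0)).flatten
    rw [SAux.VeD]
    congr 1
    apply List.map_congr_left
    intro j hj
    have hS : SAux.SeD k m a (k-2) j = S j := by
      show SAux.SeD k m a (k-2) j
        = ∑ d ∈ Finset.range (k - 2), a d (j / m ^ (k - 2 - 1 - d) % m)
      rw [SAux.SeD]
      apply Finset.sum_congr rfl
      intro d hd
      simp only [Finset.mem_range] at hd
      rw [show k-2-(k-2)+d = d by omega]
    rw [hS]
  -- total size bound in ℕ
  have hsize : ∀ (rsF : List SAux.Rl), rsF.length ≤ rs.length + (2*L+1) →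
      rsF.length ≤ 2*k*m*(2*L+2) := by
    intro rsF hlF
    have h1 : rs.length ≤ rs0.length + (k-2) * (m * (2*L+2)) := hl
    have h2 : rs0.length ≤ 2 + (m+1) * (2*L+2) := hl0
    have hm3 : 3 ≤ m := by omega
    obtain ⟨k', rfl⟩ : ∃ k', k = k' + 3 := ⟨k-3, by omega⟩
    have hk2 : k'+3-2 = k'+1 := by omega
    rw [hk2] at h1
    set X : ℕ := 2*L+2 with hXdef
    have e1 : (m+1)*X ≤ 2*(m*X) := by
      calc (m+1)*X ≤ (2*m)*X := Nat.mul_le_mul_right X (by omega)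
        _ = 2*(m*X) := by ring
    have e2a : 3*X ≤ m*X := Nat.mul_le_mul_right X hm3
    calc rsF.length ≤ (2 + (m+1)*X) + (k'+1) * (m * X) + X := by omega
      _ ≤ (m*X + 2*(m*X)) + (k'+1)*(m*X) := by omega
      _ = (k'+4)*(m*X) := by ring
      _ ≤ (2*(k'+3))*(m*X) := Nat.mul_le_mul_right _ (by omega)
      _ = 2*(k'+3)*m*X := by ring
  -- numeric bound
  have hfinal : ∀ N : ℕ, N ≤ 2*k*m*(2*L+2) → (N:ℝ) ≤ 12 * k * m * Real.logb 2 U := by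
    intro N hN
    have hmU : m ≤ U := SAux.le_of_strictmono m U (a 0) (hmono 0 (by omega))
      (fun j hj => hrange 0 (by omega) j hj) (by omega)
    have hLb : (L:ℝ) ≤ 2 * Real.logb 2 U := by
      have h1 : (L:ℝ) ≤ Real.logb 2 GG := Real.natLog_le_logb GG 2
      have hGGle : GG ≤ U*U := by
        rw [hGG]
        exact Nat.mul_le_mul_right U (by omega)
      have h2 : Real.logb 2 (GG:ℝ) ≤ Real.logb 2 ((U:ℝ)*(U:ℝ)) := by
        apply Real.logb_le_logb_of_le (by norm_num)
        · have hGU : U ≤ GG := hUG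
          have : (0:ℕ) < GG := by omega
          exact_mod_cast this
        · exact_mod_cast hGGle
      have h3 : Real.logb 2 ((U:ℝ)*(U:ℝ)) = 2 * Real.logb 2 U := by
        rw [Real.logb_mul (by positivity) (by positivity)]
        ring
      linarith
    have h1R : 1 ≤ Real.logb 2 U := by
      have h : Real.logb 2 (2:ℝ) ≤ Real.logb 2 (U:ℝ) :=
        Real.logb_le_logb_of_le (by norm_num) (by norm_num)
          (by exact_mod_cast hU)
      rwa [Real.logb_self_eq_one (by norm_num)] at h
    have hNR : (N:ℝ) ≤ 2*(k:ℝ)*m*(2*(L:ℝ)+2) := by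
      have := hN
      push_cast
      exact_mod_cast hN
    have hX6 : (2*(L:ℝ)+2) ≤ 6 * Real.logb 2 U := by linarith
    calc (N:ℝ) ≤ 2*(k:ℝ)*m*(2*(L:ℝ)+2) := hNR
      _ ≤ 2*(k:ℝ)*m*(6*Real.logb 2 U) := by
          apply mul_le_mul_of_nonneg_left hX6
          positivity
      _ = 12 * k * m * Real.logb 2 U := by ring
  -- build the final program for v
  rcases Nat.eq_zero_or_pos ((k-2)*U - SAux.MeD k m a (k-2)) with hz | hpos
  · rw [hz] at hco
    simp only [SAux.rp, List.replicate_zero, List.append_nil] at hco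
    refine ⟨SAux.mkSLP rs hw, ?_, ?_⟩
    · have := SAux.generates_of_Pd hw hd hlast'
      rw [hco, hVe] at this
      exact this
    · have hsz : (SAux.mkSLP rs hw).size = rs.length := rfl
      rw [hsz]
      exact hfinal rs.length (hsize rs (by omega))
  · obtain ⟨rs₁, j₁, hp₁, hw₁, hl₁, hd₁⟩ :=
      SAux.build_rep hw (SAux.Pd.mono' hp h00) _ hpos
    obtain ⟨rs₂, hp₂, hw₂, hl₂, hd₂⟩ := SAux.push_pair hw₁ (SAux.Pd.mono' hp₁ hd) hd₁
    refine ⟨SAux.mkSLP rs₂ hw₂, ?_, ?_⟩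
    · have hgen := SAux.generates_of_Pd hw₂ hd₂ (by omega)
      rw [show (co ++ List.replicate ((k-2)*U - SAux.MeD k m a (k-2)) (0:Fin 2)) = v from
        hVe ▸ hco] at hgen
      exact hgen
    · have hsz : (SAux.mkSLP rs₂ hw₂).size = rs₂.length := rfl
      rw [hsz]
      have hlog : Nat.log 2 ((k-2)*U - SAux.MeD k m a (k-2)) ≤ L := by
        apply Nat.log_mono_right
        have : (k-2)*U ≤ (k-1)*U := Nat.mul_le_mul_right U (by omega)
        omega
      exact hfinal rs₂.length (hsize rs₂ (by omega))
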